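/- Assume a ≠ 1, let θ > 0 with θ ≠ 1 and θ ≠ −ln b/ln a, let U₀(x) = x^{1−1/θ}/(1−1/θ) for x > 0, set δ = (1+b)/(c^{θ}·(a^{−θ} + b)) and U₁(x) = δ^{1/θ}·U₀(x). Then for every x > 0 the portfolio π*(x) = ((δ·(p/q)^{θ} − 1)/(u−1))·x satisfies −x/(u−1) ≤ π*(x) ≤ x/(1−d) and attains the supremum in the single-period inverse investment problem: p·U₁(x + π*(x)·(u−1)) + (1−p)·U₁(x + π*(x)·(d−1)) = U₀(x). -/

import Mathlib

open Set Filter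

noncomputable section

/-- A utility function: `C²` on `(0,∞)`, strictly increasing and strictly concave there,
satisfying the Inada conditions. -/
def IsUtility (U : ℝ → ℝ) : Prop :=
  ContDiffOn ℝ 2 U (Set.Ioi 0) ∧
  (∀ x > 0, 0 < deriv U x) ∧
  (∀ x > 0, deriv (deriv U) x < 0) ∧
  Tendsto (deriv U) (nhdsWithin 0 (Set.Ioi 0)) atTop ∧
  Tendsto (deriv U) atTop (nhds 0)

/-- An inverse marginal function: positive, `C¹` on `(0,∞)`, strictly decreasing derivative,
with `I(∞)=0` and `I(0+)=∞`. -/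
def IsInvMarginal (I : ℝ → ℝ) : Prop :=
  (∀ y > 0, 0 < I y) ∧
  ContDiffOn ℝ 1 I (Set.Ioi 0) ∧
  (∀ y > 0, deriv I y < 0) ∧
  Tendsto I atTop (nhds 0) ∧
  Tendsto I (nhdsWithin 0 (Set.Ioi 0)) atTop

/-- `I` is the inverse of the marginal `U'` on the positive reals: `I = (U')⁻¹`. -/
def InvMarginalOf (I U : ℝ → ℝ) : Prop :=
  (∀ x > 0, I (deriv U x) = x) ∧ (∀ y > 0, 0 < I y ∧ deriv U (I y) = y)

/-- `J` is the inverse function of `I` on the positive reals. -/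
def IsInverseOf (J I : ℝ → ℝ) : Prop :=
  (∀ y > 0, J (I y) = y) ∧ (∀ x > 0, 0 < J x ∧ I (J x) = x)

/-- The single-period inverse investment problem:
`U₀(x) = sup {p·U₁(x+π(u−1)) + (1−p)·U₁(x+π(d−1)) : −x/(u−1) ≤ π ≤ x/(1−d)}` for all `x > 0`. -/
def SPIIP (u d p : ℝ) (U₀ U₁ : ℝ → ℝ) : Prop :=
  ∀ x > 0, U₀ x =
    sSup ((fun pi => p * U₁ (x + pi * (u - 1)) + (1 - p) * U₁ (x + pi * (d - 1))) ''
      Set.Icc (-(x / (u - 1))) (x / (1 - d)))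

/-- For the power initial utility `U₀(x) = x^{1−1/θ}/(1−1/θ)` and
`U₁ = δ^{1/θ}·U₀` with `δ = (1+b)/(c^θ·(a^{−θ}+b))`, the portfolio
`π*(x) = ((δ·(p/q)^θ − 1)/(u−1))·x` is admissible and attains the supremum in the
single-period inverse investment problem:
`p·U₁(x+π*(x)(u−1)) + (1−p)·U₁(x+π*(x)(d−1)) = U₀(x)`. -/
theorem stmt19
    (u d p q a b c θ δ : ℝ)
    (hu : 1 < u) (hd0 : 0 < d) (hd1 : d < 1) (hp0 : 0 < p) (hp1 : p < 1)
    (hq : q = (1 - d) / (u - d)) (ha : a = ((1 - p) * q) / (p * (1 - q)))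
    (hb : b = (1 - q) / q) (hc : c = (1 - p) / (1 - q))
    (ha1 : a ≠ 1)
    (hθ0 : 0 < θ) (hθ1 : θ ≠ 1) (hθ2 : θ ≠ -(Real.log b / Real.log a))
    (hδ : δ = (1 + b) / (c ^ θ * (a ^ (-θ) + b)))
    (U₀ U₁ : ℝ → ℝ)
    (hU₀def : ∀ x > 0, U₀ x = x ^ (1 - 1 / θ) / (1 - 1 / θ))
    (hU₁def : ∀ x > 0, U₁ x = δ ^ (1 / θ) * (x ^ (1 - 1 / θ) / (1 - 1 / θ))) :
    ∀ x > 0, ∀ πx : ℝ, πx = ((δ * (p / q) ^ θ - 1) / (u - 1)) * x →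
      (-(x / (u - 1)) ≤ πx ∧ πx ≤ x / (1 - d)) ∧
      p * U₁ (x + πx * (u - 1)) + (1 - p) * U₁ (x + πx * (d - 1)) = U₀ x := by
  intro x hx πx hπ
  have hu1 : (0:ℝ) < u - 1 := by linarith
  have h1d : (0:ℝ) < 1 - d := by linarith
  have hud : (0:ℝ) < u - d := by linarith
  have hq0 : 0 < q := by rw [hq]; positivity
  have hq1 : q < 1 := by rw [hq, div_lt_one hud]; linarith
  have h1q : (0:ℝ) < 1 - q := by linarith
  have h1p : (0:ℝ) < 1 - p := by linarith
  have ha0 : 0 < a := by rw [ha]; positivity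
  have hb0 : 0 < b := by rw [hb]; positivity
  have hc0 : 0 < c := by rw [hc]; positivity
  set t := a ^ (-θ) with htdef
  have ht0 : 0 < t := Real.rpow_pos_of_pos ha0 _
  have hcθ : 0 < c ^ θ := Real.rpow_pos_of_pos hc0 _
  have hδ0 : 0 < δ := by rw [hδ]; positivity
  have hθne : θ ≠ 0 := hθ0.ne'
  -- algebraic relations
  have rel1 : (1 + b) * (p * a) = c := by
    rw [ha, hb, hc]; field_simp; ring
  have rel2 : (1 + b) * (1 - p) = c * b := by
    rw [hb, hc]; field_simp; ring
  have relpq : p / q = c / a := by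
    rw [ha, hc]; field_simp
  set K := δ * (p / q) ^ θ with hK
  have hKt : K = δ * (c ^ θ * t) := by
    rw [hK, relpq, Real.div_rpow hc0.le ha0.le, htdef, Real.rpow_neg ha0.le,
      div_eq_mul_inv]
  set L := δ * c ^ θ with hL
  have hK0 : 0 < K := by rw [hKt]; positivity
  have hL0 : 0 < L := by positivity
  have htb : 0 < t + b := by positivity
  have hδinv : δ * (c ^ θ * (t + b)) = 1 + b := by
    rw [hδ]; field_simp
  have key1 : q * K + (1 - q) * L = 1 := by
    have h1b : 1 + b = 1 / q := by rw [hb]; field_simp; ring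
    have hqb : 1 - q = q * b := by rw [hb]; field_simp
    have h2 : q * K + (1 - q) * L = q * (δ * (c ^ θ * (t + b))) := by
      rw [hKt, hL, hqb]; ring
    rw [h2, hδinv, h1b]; field_simp
  have key2 : δ * c ^ θ * (p * a * t + (1 - p)) = c := by
    have expand : (1 + b) * (p * a * t + (1 - p)) = c * (t + b) := by
      linear_combination t * rel1 + rel2
    have h2 : (δ * c ^ θ * (p * a * t + (1 - p))) * (t + b) = c * (t + b) := by
      calc (δ * c ^ θ * (p * a * t + (1 - p))) * (t + b)
          = (δ * (c ^ θ * (t + b))) * (p * a * t + (1 - p)) := by ring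
        _ = (1 + b) * (p * a * t + (1 - p)) := by rw [hδinv]
        _ = c * (t + b) := expand
    exact mul_right_cancel₀ htb.ne' h2
  -- wealth identities
  have hXu : x + πx * (u - 1) = K * x := by
    rw [hπ]; field_simp; ring
  have hq' : q * (u - d) = 1 - d := by rw [hq]; field_simp
  have key1' : (1 - d) * K + (u - 1) * L = u - d := by
    linear_combination (u - d) * key1 - (K - L) * hq'
  have hrel : (K - 1) * (d - 1) = (L - 1) * (u - 1) := by
    linear_combination -key1'
  have hXd : x + πx * (d - 1) = L * x := by
    rw [hπ, div_mul_eq_mul_div, div_mul_eq_mul_div, add_div' _ _ _ hu1.ne', div_eq_iff hu1.ne']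
    linear_combination x * hrel
  have hXu0 : 0 < x + πx * (u - 1) := by rw [hXu]; positivity
  have hXd0 : 0 < x + πx * (d - 1) := by rw [hXd]; positivity
  refine ⟨⟨?_, ?_⟩, ?_⟩
  · rw [← neg_div, div_le_iff₀ hu1]
    linarith [hXu0]
  · rw [le_div_iff₀ h1d]
    have hr : πx * (1 - d) = -(πx * (d - 1)) := by ring
    linarith [hXd0]
  · -- value equality
    have hat : a ^ (1 - θ) = a * t := by
      rw [htdef, Real.rpow_neg ha0.le, Real.rpow_sub ha0, Real.rpow_one,
        div_eq_mul_inv]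
    have hct : c ^ (θ - 1) = c ^ θ / c := by
      rw [Real.rpow_sub hc0, Real.rpow_one]
    have hKe : δ ^ (1/θ) * K ^ (1 - 1/θ) = δ * (c ^ (θ - 1) * a ^ (1 - θ)) := by
      rw [hKt, Real.mul_rpow hδ0.le (by positivity),
        Real.mul_rpow hcθ.le ht0.le,
        ← Real.rpow_mul hc0.le, htdef, ← Real.rpow_mul ha0.le,
        ← mul_assoc, ← Real.rpow_add hδ0,
        show 1/θ + (1 - 1/θ) = 1 by ring, Real.rpow_one,
        show θ * (1 - 1/θ) = θ - 1 by field_simp,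
        show -θ * (1 - 1/θ) = 1 - θ by field_simp; ring]
    have hLe : δ ^ (1/θ) * L ^ (1 - 1/θ) = δ * c ^ (θ - 1) := by
      rw [hL, Real.mul_rpow hδ0.le hcθ.le,
        ← Real.rpow_mul hc0.le,
        ← mul_assoc, ← Real.rpow_add hδ0,
        show 1/θ + (1 - 1/θ) = 1 by ring, Real.rpow_one,
        show θ * (1 - 1/θ) = θ - 1 by field_simp]
    have main : p * (δ ^ (1/θ) * K ^ (1 - 1/θ)) +
        (1 - p) * (δ ^ (1/θ) * L ^ (1 - 1/θ)) = 1 := by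
      rw [hKe, hLe, hat, hct]
      field_simp
      linear_combination key2
    rw [hXu, hXd, hU₁def (K * x) (by positivity), hU₁def (L * x) (by positivity),
      hU₀def x hx,
      Real.mul_rpow hK0.le hx.le, Real.mul_rpow hL0.le hx.le]
    have hθ1' : 1 - 1/θ ≠ 0 := by
      intro h
      apply hθ1
      field_simp at h
      linarith
    linear_combination (x ^ (1 - 1/θ) / (1 - 1/θ)) * main
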